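/- Let n ≥ 2, let z = [z₁,…,z_{n+1}] ∈ ∂ℍⁿ_ℂ \ {[e₁],[e_{n+1}]}, and let M_z be the (n−1)×(n−1) matrix with (i,j) entry z_{i+1} z̄_{j+1} for i ≠ j and z_{n+1} z̄₁ + |z_{i+1}|² for i = j. Then M_z M_z* = |z₁|² |z_{n+1}|² · I_{n−1}; in particular the projectivization [[M_z]] lies in PU(n−1). Moreover, every point of W_z = e₁^⊥ ∩ e_{n+1}^⊥ ∩ z^⊥ is a fixed point of φ_z = [[M_z]]. -/
import Mathlib


noncomputable section

open scoped ComplexConjugate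
open scoped Matrix

namespace CKG

/-- The underlying vector space `ℂ^{n+1}`. -/
abbrev Vc (n : ℕ) := Fin (n + 1) → ℂ

instance projTopInst (K V : Type*) [DivisionRing K] [AddCommGroup V] [Module K V]
    [TopologicalSpace V] : TopologicalSpace (Projectivization K V) :=
  inferInstanceAs (TopologicalSpace (Quotient (projectivizationSetoid K V)))

/-- The complex projective space `ℙⁿ_ℂ`. -/
abbrev Prj (n : ℕ) := Projectivization ℂ (Vc n)

/-- The Hermitian matrix `H` with ones at the corners `(1,n+1)`, `(n+1,1)` and the identity
in the central `(n-1) × (n-1)` block. -/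
def Hmat (n : ℕ) : Matrix (Fin (n + 1)) (Fin (n + 1)) ℂ := fun i j =>
  if (i = 0 ∧ j = Fin.last n) ∨ (i = Fin.last n ∧ j = 0) ∨
      (i = j ∧ i ≠ 0 ∧ i ≠ Fin.last n) then 1 else 0

/-- The Hermitian form of signature `(1,n)` induced by `H`. -/
def herm (n : ℕ) (v w : Vc n) : ℂ := ∑ i, ∑ j, v i * Hmat n i j * conj (w j)

/-- The projective hyperplane `p^⊥` of points orthogonal to `p`. -/
def orthHyp (n : ℕ) (p : Prj n) : Set (Prj n) := {q | herm n q.rep p.rep = 0}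

/-- The projective span of a set of points of `ℙⁿ_ℂ`, as a set of points. -/
def projSpan (n : ℕ) (S : Set (Prj n)) : Set (Prj n) :=
  {r | r.rep ∈ Submodule.span ℂ (Projectivization.rep '' S)}

/-- The standard basis vector `e₁`. -/
def e1v (n : ℕ) : Vc n := Pi.single 0 1

/-- The standard basis vector `e_{n+1}`. -/
def eN1v (n : ℕ) : Vc n := Pi.single (Fin.last n) 1

lemma e1v_ne_zero (n : ℕ) : e1v n ≠ 0 := by
  intro h; have := congrFun h 0; simp [e1v] at this

lemma eN1v_ne_zero (n : ℕ) : eN1v n ≠ 0 := by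
  intro h; have := congrFun h (Fin.last n); simp [eN1v] at this

/-- The point `[e₁] ∈ ℙⁿ_ℂ`. -/
def e1pt (n : ℕ) : Prj n := Projectivization.mk ℂ (e1v n) (e1v_ne_zero n)

/-- The point `[e_{n+1}] ∈ ℙⁿ_ℂ`. -/
def eN1pt (n : ℕ) : Prj n := Projectivization.mk ℂ (eN1v n) (eN1v_ne_zero n)

/-- The inclusion of indices `{1, …, n-1}` (numbering `e₂, …, e_n`) into `Fin (n+1)`. -/
def idx {n : ℕ} (i : Fin (n - 1)) : Fin (n + 1) := ⟨i.val + 1, by omega⟩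

/-- The `(n-1) × (n-1)` matrix `M_z` with `(i,j)` entry `z_{i+1} z̄_{j+1}` for `i ≠ j` and
`z_{n+1} z̄₁ + |z_{i+1}|²` for `i = j`. -/
def Mz (n : ℕ) (z : Vc n) : Matrix (Fin (n - 1)) (Fin (n - 1)) ℂ := fun i j =>
  (if i = j then z (Fin.last n) * conj (z 0) else 0) + z (idx i) * conj (z (idx j))

/-- The embedding `ℂ^{n-1} → ℂ^{n+1}` into the coordinates `2, …, n`
(realizing the identification of `ℙ^{n-2}_ℂ` with `Span({e₂,…,e_n})`). -/
def embedMid (n : ℕ) (u : Fin (n - 1) → ℂ) : Vc n :=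
  fun i => ∑ j : Fin (n - 1), if idx j = i then u j else 0

/-- The projection `ℂ^{n+1} → ℂ^{n-1}` onto the coordinates `2, …, n`. -/
def midOf (n : ℕ) (v : Vc n) : Fin (n - 1) → ℂ := fun j => v (idx j)

/-- The Cartan angular invariant `𝔸(x,y,w) = arg(−⟨x,y⟩⟨y,w⟩⟨w,x⟩)`. -/
def cartanArg (n : ℕ) (x y w : Vc n) : ℝ :=
  Complex.arg (-(herm n x y * herm n y w * herm n w x))

/-- The map `φ_z` of the paper, at the level of sets:
`φ_z(w) = Span((Span((Span({w,e_{n+1}}) ∩ z^⊥) ∪ {z}) ∩ e₁^⊥) ∪ {e₁}) ∩ e_{n+1}^⊥`. -/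
def phiSet (n : ℕ) (z w : Prj n) : Set (Prj n) :=
  projSpan n
    ((projSpan n ((projSpan n {w, eN1pt n} ∩ orthHyp n z) ∪ {z}) ∩ orthHyp n (e1pt n))
      ∪ {e1pt n}) ∩ orthHyp n (eN1pt n)


lemma idx_ne_zero {n : ℕ} (k : Fin (n - 1)) : idx k ≠ 0 := by
  have := k.isLt; simp [idx, Fin.ext_iff]

lemma idx_ne_last {n : ℕ} (k : Fin (n - 1)) : idx k ≠ Fin.last n := by
  have := k.isLt; simp [idx, Fin.ext_iff]; omega

lemma idx_injective {n : ℕ} : Function.Injective (idx (n := n)) := by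
  intro a b hab
  simpa [idx, Fin.ext_iff] using hab

lemma index_cases {n : ℕ} (i : Fin (n + 1)) :
    i = 0 ∨ i = Fin.last n ∨ ∃ k : Fin (n - 1), idx k = i := by
  rcases Nat.eq_zero_or_pos i.val with h | h
  · exact Or.inl (Fin.ext h)
  rcases eq_or_ne i (Fin.last n) with h' | h'
  · exact Or.inr (Or.inl h')
  · refine Or.inr (Or.inr ⟨⟨i.val - 1, ?_⟩, ?_⟩)
    · have := i.isLt
      have : i.val ≠ n := fun hh => h' (Fin.ext hh)
      omega
    · simp [idx, Fin.ext_iff]; omega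

lemma image_idx {n : ℕ} :
    Finset.image (idx (n := n)) Finset.univ = Finset.univ \ {0, Fin.last n} := by
  ext i
  simp only [Finset.mem_image, Finset.mem_univ, true_and, Finset.mem_sdiff,
    Finset.mem_insert, Finset.mem_singleton]
  constructor
  · rintro ⟨k, rfl⟩
    intro h
    rcases h with h | h
    · exact idx_ne_zero k h
    · exact idx_ne_last k h
  · intro h
    rcases index_cases i with h0 | h0 | ⟨k, hk⟩
    · exact absurd (Or.inl h0) h
    · exact absurd (Or.inr h0) h
    · exact ⟨k, hk⟩

lemma herm_expand (n : ℕ) (hn : 1 ≤ n) (x y : Vc n) :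
    herm n x y = x 0 * conj (y (Fin.last n)) + x (Fin.last n) * conj (y 0)
      + ∑ k : Fin (n - 1), x (idx k) * conj (y (idx k)) := by
  have h0last : (0 : Fin (n + 1)) ≠ Fin.last n := by
    simp [Fin.ext_iff]; omega
  have inner : ∀ i : Fin (n + 1), (∑ j, x i * Hmat n i j * conj (y j)) =
      if i = 0 then x 0 * conj (y (Fin.last n))
      else if i = Fin.last n then x (Fin.last n) * conj (y 0)
      else x i * conj (y i) := by
    intro i
    rcases index_cases i with rfl | rfl | ⟨k, rfl⟩
    · rw [if_pos rfl]
      have hH : ∀ j, Hmat n 0 j = if j = Fin.last n then 1 else 0 := by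
        intro j
        simp only [Hmat]
        by_cases hj : j = Fin.last n <;> simp [hj, h0last, h0last.symm]
      calc ∑ j, x 0 * Hmat n 0 j * conj (y j)
          = ∑ j, if j = Fin.last n then x 0 * conj (y j) else 0 := by
            refine Finset.sum_congr rfl fun j _ => ?_
            rw [hH j]; by_cases hj : j = Fin.last n <;> simp [hj]
        _ = x 0 * conj (y (Fin.last n)) := by
            rw [Finset.sum_ite_eq' Finset.univ (Fin.last n)
              (fun j => x 0 * conj (y j))]; simp
    · rw [if_neg h0last.symm, if_pos rfl]
      have hH : ∀ j, Hmat n (Fin.last n) j = if j = 0 then 1 else 0 := by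
        intro j
        simp only [Hmat]
        by_cases hj : j = (0 : Fin (n+1)) <;> simp [hj, h0last, h0last.symm]
      calc ∑ j, x (Fin.last n) * Hmat n (Fin.last n) j * conj (y j)
          = ∑ j, if j = 0 then x (Fin.last n) * conj (y j) else 0 := by
            refine Finset.sum_congr rfl fun j _ => ?_
            rw [hH j]; by_cases hj : j = (0 : Fin (n+1)) <;> simp [hj]
        _ = x (Fin.last n) * conj (y 0) := by
            rw [Finset.sum_ite_eq' Finset.univ (0 : Fin (n+1))
              (fun j => x (Fin.last n) * conj (y j))]; simp
    · rw [if_neg (idx_ne_zero k), if_neg (idx_ne_last k)]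
      have hH : ∀ j, Hmat n (idx k) j = if j = idx k then 1 else 0 := by
        intro j
        simp only [Hmat]
        by_cases hj : j = idx k <;>
          simp [hj, idx_ne_zero k, idx_ne_last k, eq_comm (a := idx k)]
      calc ∑ j, x (idx k) * Hmat n (idx k) j * conj (y j)
          = ∑ j, if j = idx k then x (idx k) * conj (y j) else 0 := by
            refine Finset.sum_congr rfl fun j _ => ?_
            rw [hH j]; by_cases hj : j = idx k <;> simp [hj]
        _ = x (idx k) * conj (y (idx k)) := by
            rw [Finset.sum_ite_eq' Finset.univ (idx k)
              (fun j => x (idx k) * conj (y j))]; simp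
  unfold herm
  rw [Finset.sum_congr rfl fun i _ => inner i]
  have hlast_mem : Fin.last n ∈ Finset.univ \ ({0} : Finset (Fin (n+1))) := by
    simp [h0last.symm]
  rw [← Finset.add_sum_erase _ _ (Finset.mem_univ (0 : Fin (n+1))), if_pos rfl,
    ← Finset.add_sum_erase _ _ (show Fin.last n ∈ Finset.univ.erase (0 : Fin (n+1)) by
      simp [h0last.symm]),
    if_neg h0last.symm, if_pos rfl]
  rw [add_assoc]
  congr 1
  congr 1
  have hset : (Finset.univ.erase (0 : Fin (n+1))).erase (Fin.last n)
      = Finset.univ \ {0, Fin.last n} := by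
    ext i; simp [Finset.mem_erase, Finset.mem_sdiff, and_comm, and_assoc]
  rw [hset, ← image_idx, Finset.sum_image (fun a _ b _ h => idx_injective h)]
  exact Finset.sum_congr rfl fun k _ => by
    rw [if_neg (idx_ne_zero k), if_neg (idx_ne_last k)]


lemma Mz_decomp (n : ℕ) (zv : Vc n) :
    Mz n zv = (zv (Fin.last n) * conj (zv 0)) • 1
      + Matrix.vecMulVec (fun k => zv (idx k)) (star fun k => zv (idx k)) := by
  ext i j
  simp only [Mz, Matrix.add_apply, Matrix.smul_apply, Matrix.one_apply,
    Matrix.vecMulVec_apply, Pi.star_apply, smul_eq_mul, mul_ite, mul_one, mul_zero,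
    starRingEnd_apply]

lemma aux_unit (m : ℕ) (a : ℂ) (v : Fin m → ℂ)
    (hb : a + conj a + ∑ k, v k * conj (v k) = 0) :
    (a • 1 + Matrix.vecMulVec v (star v)) * (a • 1 + Matrix.vecMulVec v (star v))ᴴ
      = (a * conj a) • (1 : Matrix (Fin m) (Fin m) ℂ) := by
  set W := Matrix.vecMulVec v (star v) with hW
  have hWH : Wᴴ = W := by
    ext i j
    simp [hW, Matrix.conjTranspose_apply, Matrix.vecMulVec_apply, mul_comm]
  have hWW : W * W = (∑ k, v k * conj (v k)) • W := by
    ext i j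
    simp only [Matrix.mul_apply, hW, Matrix.vecMulVec_apply, Matrix.smul_apply,
      smul_eq_mul, Pi.star_apply]
    rw [Finset.sum_mul]
    refine Finset.sum_congr rfl fun k _ => ?_
    simp only [starRingEnd_apply]; ring
  have h1 : (a • 1 + W)ᴴ = conj a • (1 : Matrix (Fin m) (Fin m) ℂ) + W := by
    rw [Matrix.conjTranspose_add, Matrix.conjTranspose_smul, Matrix.conjTranspose_one, hWH,
      starRingEnd_apply]
  rw [h1, Matrix.add_mul, Matrix.mul_add, Matrix.mul_add, hWW]
  have e1 : (a • (1 : Matrix (Fin m) (Fin m) ℂ)) * (conj a • 1) = (a * conj a) • 1 := by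
    simp [Matrix.smul_mul, Matrix.mul_smul, smul_smul, mul_comm]
  have e2 : (a • (1 : Matrix (Fin m) (Fin m) ℂ)) * W = a • W := by
    simp [Matrix.smul_mul]
  have e3 : W * (conj a • (1 : Matrix (Fin m) (Fin m) ℂ)) = conj a • W := by
    simp [Matrix.mul_smul]
  rw [e1, e2, e3]
  have hsum0 : a • W + conj a • W + (∑ k, v k * conj (v k)) • W = 0 := by
    rw [← add_smul, ← add_smul, hb, zero_smul]
  have rearr : ((a * conj a) • (1 : Matrix (Fin m) (Fin m) ℂ) + a • W)
      + (conj a • W + (∑ k, v k * conj (v k)) • W)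
      = (a * conj a) • 1 + (a • W + conj a • W + (∑ k, v k * conj (v k)) • W) := by abel
  rw [rearr, hsum0, add_zero]

lemma aux_fix (m : ℕ) (a : ℂ) (v u : Fin m → ℂ)
    (h : ∑ k, conj (v k) * u k = 0) :
    (a • 1 + Matrix.vecMulVec v (star v)).mulVec u = a • u := by
  have hz : (Matrix.vecMulVec v (star v)).mulVec u = 0 := by
    funext i
    simp only [Matrix.mulVec, dotProduct, Matrix.vecMulVec_apply, Pi.zero_apply,
      Pi.star_apply]
    calc ∑ k, v i * star (v k) * u k = v i * ∑ k, conj (v k) * u k := by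
          rw [Finset.mul_sum]
          exact Finset.sum_congr rfl fun k _ => by simp only [starRingEnd_apply]; ring
      _ = 0 := by rw [h, mul_zero]
  rw [Matrix.add_mulVec, Matrix.smul_mulVec, Matrix.one_mulVec, hz, add_zero]

/-- For `z ∈ ∂ℍⁿ_ℂ \\ {[e₁],[e_{n+1}]}` one has
`M_z M_z* = |z₁|²|z_{n+1}|² · I`; in particular `[[M_z]]` lies in `PU(n-1)` (a nonzero scalar
multiple of `M_z` is unitary).  Moreover every point of `W_z = e₁^⊥ ∩ e_{n+1}^⊥ ∩ z^⊥`
(viewed in `ℙ^{n-2}_ℂ`) is a fixed point of `φ_z = [[M_z]]`. -/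
theorem Mz_scalar_unitary_and_Wz_fixed
    (n : ℕ) (hn : 2 ≤ n) (zv : Vc n) (hzne : zv ≠ 0)
    (hbd : herm n zv zv = 0)
    (hz1 : Projectivization.mk ℂ zv hzne ≠ e1pt n)
    (hz2 : Projectivization.mk ℂ zv hzne ≠ eN1pt n) :
    (Mz n zv) * (Mz n zv)ᴴ =
      ((Complex.normSq (zv 0) : ℂ) * (Complex.normSq (zv (Fin.last n)) : ℂ)) •
        (1 : Matrix (Fin (n - 1)) (Fin (n - 1)) ℂ) ∧
    (∃ c : ℂ, c ≠ 0 ∧ c • Mz n zv ∈ Matrix.unitaryGroup (Fin (n - 1)) ℂ) ∧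
    (∀ u : Fin (n - 1) → ℂ, u ≠ 0 → herm n (embedMid n u) zv = 0 →
      ∃ c : ℂ, c ≠ 0 ∧ (Mz n zv).mulVec u = c • u) := by
  have hn1 : 1 ≤ n := le_trans (by norm_num) hn
  have h0last : (0 : Fin (n + 1)) ≠ Fin.last n := by
    simp [Fin.ext_iff]; omega
  -- boundary condition in expanded form
  have hb : (zv (Fin.last n) * conj (zv 0)) + conj (zv (Fin.last n) * conj (zv 0))
      + ∑ k : Fin (n - 1), zv (idx k) * conj (zv (idx k)) = 0 := by
    have h := hbd
    rw [herm_expand n hn1 zv zv] at h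
    have hc : conj (zv (Fin.last n) * conj (zv 0)) = zv 0 * conj (zv (Fin.last n)) := by
      rw [map_mul, Complex.conj_conj]; ring
    rw [hc]
    linear_combination h
  -- nonvanishing of the corner coordinates
  have hmidzero : ∀ w : ℂ, (zv (Fin.last n) * conj (zv 0)) = 0 →
      ∀ k : Fin (n - 1), zv (idx k) = 0 := by
    intro w hw
    have hS : ∑ k : Fin (n - 1), zv (idx k) * conj (zv (idx k)) = 0 := by
      have := hb; rw [hw] at this; simpa using this
    have hS' : ((∑ k : Fin (n - 1), Complex.normSq (zv (idx k)) : ℝ) : ℂ) = 0 := by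
      push_cast
      calc ∑ k : Fin (n - 1), (Complex.normSq (zv (idx k)) : ℂ)
          = ∑ k : Fin (n - 1), zv (idx k) * conj (zv (idx k)) :=
            Finset.sum_congr rfl fun k _ => (Complex.mul_conj _).symm
        _ = 0 := hS
    have hS'' : ∑ k : Fin (n - 1), Complex.normSq (zv (idx k)) = 0 := by
      exact_mod_cast hS'
    intro k
    have := (Finset.sum_eq_zero_iff_of_nonneg
      (fun i _ => Complex.normSq_nonneg (zv (idx i)))).1 hS'' k (Finset.mem_univ k)
    exact Complex.normSq_eq_zero.1 this
  have hlast : zv (Fin.last n) ≠ 0 := by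
    intro h
    have hz : ∀ k : Fin (n - 1), zv (idx k) = 0 :=
      hmidzero 0 (by rw [h, zero_mul])
    apply hz1
    rw [e1pt, Projectivization.mk_eq_mk_iff']
    refine ⟨zv 0, ?_⟩
    funext i
    rcases index_cases i with rfl | rfl | ⟨k, rfl⟩
    · simp [e1v]
    · simp [e1v, Pi.single_eq_of_ne h0last.symm, h]
    · simp [e1v, Pi.single_eq_of_ne (idx_ne_zero k), hz k]
  have h0ne : zv 0 ≠ 0 := by
    intro h
    have hz : ∀ k : Fin (n - 1), zv (idx k) = 0 :=
      hmidzero 0 (by rw [h, map_zero, mul_zero])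
    apply hz2
    rw [eN1pt, Projectivization.mk_eq_mk_iff']
    refine ⟨zv (Fin.last n), ?_⟩
    funext i
    rcases index_cases i with rfl | rfl | ⟨k, rfl⟩
    · simp [eN1v, Pi.single_eq_of_ne h0last, h]
    · simp [eN1v]
    · simp [eN1v, Pi.single_eq_of_ne (idx_ne_last k), hz k]
  have ha : zv (Fin.last n) * conj (zv 0) ≠ 0 :=
    mul_ne_zero hlast (by simpa using h0ne)
  -- Part 1
  have hval : (zv (Fin.last n) * conj (zv 0)) * conj (zv (Fin.last n) * conj (zv 0))
      = (Complex.normSq (zv 0) : ℂ) * (Complex.normSq (zv (Fin.last n)) : ℂ) := by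
    rw [← Complex.mul_conj, ← Complex.mul_conj, map_mul, Complex.conj_conj]
    ring
  have P1 : (Mz n zv) * (Mz n zv)ᴴ =
      ((Complex.normSq (zv 0) : ℂ) * (Complex.normSq (zv (Fin.last n)) : ℂ)) •
        (1 : Matrix (Fin (n - 1)) (Fin (n - 1)) ℂ) := by
    rw [Mz_decomp n zv, aux_unit (n - 1) _ _ hb, hval]
  refine ⟨P1, ?_, ?_⟩
  -- Part 2
  · set s : ℝ := Complex.normSq (zv 0) * Complex.normSq (zv (Fin.last n)) with hs
    have hs_pos : 0 < s :=
      mul_pos (Complex.normSq_pos.2 h0ne) (Complex.normSq_pos.2 hlast)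
    refine ⟨(((Real.sqrt s)⁻¹ : ℝ) : ℂ), ?_, ?_⟩
    · exact Complex.ofReal_ne_zero.2 (inv_ne_zero (ne_of_gt (Real.sqrt_pos.2 hs_pos)))
    · rw [Matrix.mem_unitaryGroup_iff]
      have hstar : star ((((Real.sqrt s)⁻¹ : ℝ) : ℂ) • Mz n zv)
          = (((Real.sqrt s)⁻¹ : ℝ) : ℂ) • (Mz n zv)ᴴ := by
        rw [star_smul, Matrix.star_eq_conjTranspose, RCLike.star_def, Complex.conj_ofReal]
      rw [hstar, smul_mul_assoc, Matrix.mul_smul, P1, smul_smul, smul_smul]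
      have hsc : (((Real.sqrt s)⁻¹ : ℝ) : ℂ) * ((((Real.sqrt s)⁻¹ : ℝ) : ℂ) *
          ((Complex.normSq (zv 0) : ℂ) * (Complex.normSq (zv (Fin.last n)) : ℂ))) = 1 := by
        have hr : (Real.sqrt s)⁻¹ * ((Real.sqrt s)⁻¹ * s) = 1 := by
          rw [← mul_assoc, ← mul_inv, Real.mul_self_sqrt hs_pos.le]
          exact inv_mul_cancel₀ (ne_of_gt hs_pos)
        calc (((Real.sqrt s)⁻¹ : ℝ) : ℂ) * ((((Real.sqrt s)⁻¹ : ℝ) : ℂ) *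
            ((Complex.normSq (zv 0) : ℂ) * (Complex.normSq (zv (Fin.last n)) : ℂ)))
            = (((Real.sqrt s)⁻¹ * ((Real.sqrt s)⁻¹ * s) : ℝ) : ℂ) := by
              rw [hs]; push_cast; ring
          _ = 1 := by rw [hr]; norm_num
      rw [mul_assoc, hsc, one_smul]
  -- Part 3
  · intro u hu hherm
    have hE0 : embedMid n u 0 = 0 :=
      Finset.sum_eq_zero fun j _ => if_neg (idx_ne_zero j)
    have hEl : embedMid n u (Fin.last n) = 0 :=
      Finset.sum_eq_zero fun j _ => if_neg (idx_ne_last j)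
    have hEk : ∀ k : Fin (n - 1), embedMid n u (idx k) = u k := by
      intro k
      calc embedMid n u (idx k) = ∑ j : Fin (n - 1), if j = k then u j else 0 := by
            refine Finset.sum_congr rfl fun j _ => ?_
            by_cases hjk : j = k
            · rw [if_pos (by rw [hjk]), if_pos hjk]
            · rw [if_neg (fun hh => hjk (idx_injective hh)), if_neg hjk]
        _ = u k := by rw [Finset.sum_ite_eq' Finset.univ k u]; simp
    have hsum : ∑ k : Fin (n - 1), conj (zv (idx k)) * u k = 0 := by
      have h1 : ∑ k : Fin (n - 1), embedMid n u (idx k) * conj (zv (idx k)) = 0 := by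
        have h := hherm
        rw [herm_expand n hn1] at h
        rw [hE0, hEl] at h
        simpa using h
      calc ∑ k : Fin (n - 1), conj (zv (idx k)) * u k
          = ∑ k : Fin (n - 1), embedMid n u (idx k) * conj (zv (idx k)) :=
            Finset.sum_congr rfl fun k _ => by rw [hEk k]; ring
        _ = 0 := h1
    refine ⟨zv (Fin.last n) * conj (zv 0), ha, ?_⟩
    rw [Mz_decomp n zv]
    exact aux_fix (n - 1) _ _ u hsum

end CKG
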